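/- Let B be a C*-algebra and A ⊆ B a *-subTRO, i.e., a closed linear subspace with a* ∈ A for all a ∈ A and x y* z ∈ A for all x, y, z ∈ A. If x ∈ A and x ≥ 0 in B, then x belongs to the closed linear span in B of the set of products {a b : a, b ∈ A}. -/

import Mathlib

open scoped ContinuousMapZero


set_option maxHeartbeats 1000000 in
/-- If `A` is a *-subTRO of a C*-algebra `B` (a closed subspace, closed under
adjoints and under the ternary product `x y* z`), and `x ∈ A` is positive in `B`
(`x = c* c` for some `c ∈ B`), then `x` lies in the closed linear span of the products
`{a b : a, b ∈ A}`. -/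
theorem positive_elem_of_star_subTRO_mem_closedSpan_sq
    (B : Type*) [NonUnitalCStarAlgebra B] (A : Submodule ℂ B)
    (hAclosed : IsClosed (A : Set B))
    (hAstar : ∀ a ∈ A, star a ∈ A)
    (hATRO : ∀ x ∈ A, ∀ y ∈ A, ∀ z ∈ A, x * star y * z ∈ A)
    (x : B) (hxA : x ∈ A) (hxpos : ∃ c : B, x = star c * c) :
    x ∈ (Submodule.span ℂ {x : B | ∃ a ∈ A, ∃ b ∈ A, x = a * b}).topologicalClosure := by
  obtain ⟨c, hc⟩ := hxpos
  have hxsa : IsSelfAdjoint x := hc ▸ IsSelfAdjoint.star_mul_self c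
  have hxs : star x = x := hxsa.star_eq
  -- the quasispectrum of `x` is nonnegative
  have hqs : ∀ t ∈ quasispectrum ℝ x, 0 ≤ t := by
    rw [Unitization.quasispectrum_eq_spectrum_inr' ℝ ℂ x]
    intro t ht
    have hxc : (x : Unitization ℂ B) = star (c : Unitization ℂ B) * (c : Unitization ℂ B) := by
      rw [hc, Unitization.inr_mul, Unitization.inr_star]
    rw [hxc] at ht
    exact spectrum_star_mul_self_nonneg t ht
  set S := Submodule.span ℂ {y : B | ∃ a ∈ A, ∃ b ∈ A, y = a * b} with hSdef
  -- `op k` is `x ^ (2k+1)` as an iterated product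
  let op : ℕ → B := fun k => Nat.rec x (fun _ y => y * x * x) k
  have hop0 : op 0 = x := rfl
  have hopsucc : ∀ k, op (k + 1) = op k * x * x := fun _ => rfl
  have hopA : ∀ k, op k ∈ A := by
    intro k; induction k with
    | zero => exact hxA
    | succ k ih =>
      rw [hopsucc]
      simpa only [hxs] using hATRO _ ih _ hxA _ hxA
  have hcommC : ∀ k, Commute (op k) x := by
    intro k; induction k with
    | zero => exact Commute.refl x
    | succ k ih => exact (ih.mul_left (Commute.refl x)).mul_left (Commute.refl x)
  have hcomm : ∀ k, op k * x = x * op k := fun k => (hcommC k).eq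
  have hopsa : ∀ k, star (op k) = op k := by
    intro k; induction k with
    | zero => exact hxs
    | succ k ih =>
      rw [hopsucc, star_mul, star_mul, hxs, ih, ← hcomm k, ← mul_assoc, ← hcomm k]
  -- M is the span of the even powers `x^(2k+2) = op k * x`
  set M := Submodule.span ℂ {y : B | ∃ k : ℕ, y = op k * x} with hMdef
  have hMS : (M : Set B) ⊆ (S : Set B) := by
    apply Submodule.span_le.mpr
    rintro y ⟨k, rfl⟩
    exact Submodule.subset_span ⟨op k, hopA k, x, hxA, rfl⟩
  have hmulgen : ∀ j k : ℕ, (op j * x) * (op k * x) = op (j + k + 1) * x := by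
    intro j k; induction k with
    | zero =>
      simp only [Nat.add_zero, hop0, hopsucc, ← mul_assoc]
    | succ k ih =>
      rw [hopsucc k, show j + (k + 1) + 1 = (j + k + 1) + 1 by omega, hopsucc (j + k + 1),
        ← mul_assoc, ← mul_assoc, ih]
  have hgensa : ∀ k, star (op k * x) = op k * x := by
    intro k
    rw [star_mul, hxs, hopsa k, ← hcomm k]
  have hMstar : ∀ p ∈ M, star p ∈ M := by
    intro p hp
    induction hp using Submodule.span_induction with
    | mem z hz =>
      obtain ⟨k, rfl⟩ := hz
      rw [hgensa k]
      exact Submodule.subset_span ⟨k, rfl⟩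
    | zero => simpa using M.zero_mem
    | add a b _ _ ha hb => rw [star_add]; exact M.add_mem ha hb
    | smul c a _ h => rw [star_smul]; exact M.smul_mem _ h
  have hMmul : ∀ p ∈ M, ∀ q ∈ M, p * q ∈ M := by
    intro p hp
    induction hp using Submodule.span_induction with
    | mem z hz =>
      intro q hq
      induction hq using Submodule.span_induction with
      | mem w hw =>
        obtain ⟨j, rfl⟩ := hz
        obtain ⟨k, rfl⟩ := hw
        rw [hmulgen j k]
        exact Submodule.subset_span ⟨j + k + 1, rfl⟩
      | zero => rw [mul_zero]; exact M.zero_mem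
      | add a b _ _ ha hb => rw [mul_add]; exact M.add_mem ha hb
      | smul c a _ h => rw [mul_smul_comm]; exact M.smul_mem c h
    | zero => intro q hq; rw [zero_mul]; exact M.zero_mem
    | add a b _ _ ha hb => intro q hq; rw [add_mul]; exact M.add_mem (ha q hq) (hb q hq)
    | smul c a _ h => intro q hq; rw [smul_mul_assoc]; exact M.smul_mem c (h q hq)
  -- the continuous functional calculus of `x * x`
  have hsq : IsSelfAdjoint (x * x) := by
    rw [IsSelfAdjoint, star_mul, hxs]
  have hf : ContinuousOn Real.sqrt (quasispectrum ℝ (x * x)) :=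
    Real.continuous_sqrt.continuousOn
  have hf0 : Real.sqrt 0 = 0 := Real.sqrt_zero
  set fsqrt : C(quasispectrum ℝ (x * x), ℝ)₀ := ⟨⟨_, hf.restrict⟩, hf0⟩ with hfsqrt
  have hx_eq : cfcₙHom hsq fsqrt = x := by
    rw [← cfcₙ_apply Real.sqrt (x * x) hf hf0 hsq]
    have h2 : x * x = cfcₙ (fun t : ℝ => t * t) x := by
      rw [cfcₙ_mul _ _ x (by fun_prop) (by simp) (by fun_prop) (by simp), cfcₙ_id' ℝ x]
    rw [h2, ← cfcₙ_comp Real.sqrt (fun t : ℝ => t * t) x (by fun_prop) Real.sqrt_zero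
      (by fun_prop) (by simp) hxsa]
    have h3 : (quasispectrum ℝ x).EqOn (Real.sqrt ∘ fun t : ℝ => t * t) id := by
      intro t ht
      simpa using Real.sqrt_mul_self (hqs t ht)
    rw [cfcₙ_congr h3, cfcₙ_id ℝ x]
  set gen : C(quasispectrum ℝ (x * x), ℝ)₀ := ContinuousMapZero.id (quasispectrum ℝ (x * x)) with hgen
  set 𝒜 : NonUnitalStarSubalgebra ℝ C(quasispectrum ℝ (x * x), ℝ)₀ :=
    NonUnitalStarAlgebra.adjoin ℝ {gen} with h𝒜
  have hdense : fsqrt ∈ closure (𝒜 : Set C(quasispectrum ℝ (x * x), ℝ)₀) :=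
    (ContinuousMapZero.adjoin_id_dense (quasispectrum ℝ (x * x))) _
  have hmaps : Set.MapsTo (cfcₙHom hsq) (𝒜 : Set C(quasispectrum ℝ (x * x), ℝ)₀)
      (M : Set B) := by
    intro g hg
    simp only [SetLike.mem_coe] at hg ⊢
    induction hg using NonUnitalStarAlgebra.adjoin_induction with
    | mem g hg =>
      obtain rfl : g = gen := hg
      have : cfcₙHom (R := ℝ) hsq gen = x * x := cfcₙHom_id hsq
      rw [this]
      exact Submodule.subset_span ⟨0, rfl⟩
    | add a b _ _ ha hb => rw [map_add]; exact M.add_mem ha hb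
    | zero => rw [map_zero]; exact M.zero_mem
    | mul a b _ _ ha hb => rw [map_mul]; exact hMmul _ ha _ hb
    | smul r a _ h => rw [map_smul]; exact M.smul_of_tower_mem r h
    | star a _ h => rw [map_star]; exact hMstar _ h
  have hclos : x ∈ closure (M : Set B) := by
    rw [← hx_eq]
    exact map_mem_closure (cfcₙHom_continuous hsq) hdense hmaps
  exact closure_mono hMS hclos
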